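/- (Abstract form of the differentiated equations (2.14)–(2.15), higher order.) Assume in addition that the coercivity hypothesis a_t(v,v) ≥ c‖v‖_H² holds for all t in an open set U ⊆ ℝ^N containing [0,1]^N. For t ∈ U let u(t) ∈ H denote the unique solution of a_t(u(t), v) = ℓ_t(v) for all v ∈ H, and define recursively, for each multi-index α ∈ ℕ^N: w_0(t) := u(t), and for |α| ≥ 1, w_α(t) is the unique element of H satisfying a_t(w_α(t), v) = ℓ_α(v) − Σ_{j=1}^N α_j b_j(w_{α−e_j}(t), v) for all v ∈ H, where ℓ_α := ℓ_i if α = e_i (a unit multi-index) and ℓ_α := 0 if |α| ≥ 2, and where terms with α_j = 0 are omitted. Then each w_α(t) is well defined, the solution map t ↦ u(t) has partial derivatives of all orders on U, and ∂_t^α u(t) = w_α(t) for every multi-index α and every t ∈ U. -/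

import Mathlib

open scoped BigOperators

set_option synthInstance.maxHeartbeats 1000000
set_option maxHeartbeats 4000000
open InnerProductSpace ContinuousLinearMap RealInnerProductSpace

noncomputable section
variable {H : Type*} [NormedAddCommGroup H] [InnerProductSpace ℝ H] [CompleteSpace H] {N : ℕ}

def PSMtmap (b0 : H →L[ℝ] H →L[ℝ] ℝ) (b : Fin N → H →L[ℝ] H →L[ℝ] ℝ) (t : Fin N → ℝ) :
    H →L[ℝ] H :=
  continuousLinearMapOfBilin (𝕜 := ℝ) b0 + ∑ i, t i • continuousLinearMapOfBilin (𝕜 := ℝ) (b i)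

lemma PSMinner_tmap (b0 : H →L[ℝ] H →L[ℝ] ℝ) (b : Fin N → H →L[ℝ] H →L[ℝ] ℝ)
    (t : Fin N → ℝ) (x v : H) :
    ⟪PSMtmap b0 b t x, v⟫_ℝ = b0 x v + ∑ i, t i * b i x v := by
  simp [PSMtmap, ContinuousLinearMap.sum_apply, inner_add_left, sum_inner,
    real_inner_smul_left, continuousLinearMapOfBilin_apply (𝕜 := ℝ)]

lemma PSMtmap_isUnit (b0 : H →L[ℝ] H →L[ℝ] ℝ) (b : Fin N → H →L[ℝ] H →L[ℝ] ℝ)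
    {c : ℝ} (hc : 0 < c) {t : Fin N → ℝ}
    (hco : ∀ v : H, c * ‖v‖ ^ 2 ≤ b0 v v + ∑ i, t i * b i v v) :
    IsUnit (PSMtmap b0 b t) := by
  have hcoB : IsCoercive (b0 + ∑ i, t i • b i) := by
    refine ⟨c, hc, fun v => ?_⟩
    have := hco v
    rw [pow_two] at this
    simpa [ContinuousLinearMap.sum_apply, mul_assoc] using this
  have hEq : PSMtmap b0 b t = continuousLinearMapOfBilin (𝕜 := ℝ) (b0 + ∑ i, t i • b i) := by
    apply ContinuousLinearMap.ext; intro x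
    apply ext_inner_right ℝ; intro v
    rw [PSMinner_tmap, continuousLinearMapOfBilin_apply (𝕜 := ℝ)]
    simp [ContinuousLinearMap.sum_apply]
  have hEq2 : PSMtmap b0 b t = (hcoB.continuousLinearEquivOfBilin : H →L[ℝ] H) := by
    rw [hEq]; rfl
  rw [hEq2]
  exact ⟨⟨(hcoB.continuousLinearEquivOfBilin : H →L[ℝ] H),
    (hcoB.continuousLinearEquivOfBilin.symm : H →L[ℝ] H),
    by ext x; simp, by ext x; simp⟩, rfl⟩

def PSMrho (f : H →L[ℝ] ℝ) : H := (toDual ℝ H).symm f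

lemma PSMinner_rho (f : H →L[ℝ] ℝ) (v : H) : ⟪PSMrho f, v⟫_ℝ = f v :=
  toDual_symm_apply

variable (b0 : H →L[ℝ] H →L[ℝ] ℝ) (b : Fin N → H →L[ℝ] H →L[ℝ] ℝ)
  (l0 : H →L[ℝ] ℝ) (l : Fin N → H →L[ℝ] ℝ)

lemma PSMsum_single_lt {α : Fin N → ℕ} {j : Fin N} (hj : ¬ α j = 0) :
    ∑ i : Fin N, (α - Pi.single j 1 : Fin N → ℕ) i < ∑ i : Fin N, α i := by
  have hle : ∀ i ∈ Finset.univ, (Pi.single j 1 : Fin N → ℕ) i ≤ α i := by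
    intro i _
    rcases eq_or_ne i j with rfl | h
    · simpa [Nat.one_le_iff_ne_zero] using hj
    · simp [Pi.single_eq_of_ne h]
  have h1 : ∑ i : Fin N, (α - Pi.single j 1 : Fin N → ℕ) i = ∑ i : Fin N, α i - ∑ i : Fin N, (Pi.single j 1 : Fin N → ℕ) i := by
    simpa [Pi.sub_apply] using Finset.sum_tsub_distrib Finset.univ hle
  have h2 : ∑ i : Fin N, (Pi.single j 1 : Fin N → ℕ) i = 1 := by
    simp [Finset.sum_pi_single]
  have h3 : 1 ≤ ∑ i : Fin N, α i :=
    le_trans (by simpa [Nat.one_le_iff_ne_zero] using hj)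
      (Finset.single_le_sum (f := α) (fun i _ => Nat.zero_le _) (Finset.mem_univ j))
  omega

def PSMw : (Fin N → ℕ) → (Fin N → ℝ) → H
  | α, t =>
    if α = 0 then
      Ring.inverse (PSMtmap b0 b t) (PSMrho l0 + ∑ i, t i • PSMrho (l i))
    else
      Ring.inverse (PSMtmap b0 b t)
        ((∑ i, if α = Pi.single i 1 then PSMrho (l i) else 0) -
          ∑ j : Fin N, if hj : α j = 0 then 0
            else (α j : ℝ) • continuousLinearMapOfBilin (𝕜 := ℝ) (b j)
              (PSMw (α - Pi.single j 1) t))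
  termination_by α _ => ∑ i, α i
  decreasing_by exact PSMsum_single_lt hj

def PSMg (α : Fin N → ℕ) (t : Fin N → ℝ) : H :=
  if α = 0 then PSMrho l0 + ∑ i, t i • PSMrho (l i)
  else (∑ i, if α = Pi.single i 1 then PSMrho (l i) else 0) -
    ∑ j : Fin N, if α j = 0 then 0
      else (α j : ℝ) • continuousLinearMapOfBilin (𝕜 := ℝ) (b j)
        (PSMw b0 b l0 l (α - Pi.single j 1) t)

lemma PSMw_eq (α : Fin N → ℕ) (t : Fin N → ℝ) :
    PSMw b0 b l0 l α t = Ring.inverse (PSMtmap b0 b t) (PSMg b0 b l0 l α t) := by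
  rw [PSMw.eq_1, PSMg]
  split <;> rfl

lemma PSMapply_inv {t : Fin N → ℝ} (h : IsUnit (PSMtmap b0 b t)) (x : H) :
    PSMtmap b0 b t (Ring.inverse (PSMtmap b0 b t) x) = x := by
  have : (PSMtmap b0 b t * Ring.inverse (PSMtmap b0 b t)) x = (1 : H →L[ℝ] H) x := by
    rw [Ring.mul_inverse_cancel _ h]
  simpa [ContinuousLinearMap.mul_apply] using this

lemma PSMinv_apply {t : Fin N → ℝ} (h : IsUnit (PSMtmap b0 b t)) (x : H) :
    Ring.inverse (PSMtmap b0 b t) (PSMtmap b0 b t x) = x := by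
  have : (Ring.inverse (PSMtmap b0 b t) * PSMtmap b0 b t) x = (1 : H →L[ℝ] H) x := by
    rw [Ring.inverse_mul_cancel _ h]
  simpa [ContinuousLinearMap.mul_apply] using this

def PSMphi (b : Fin N → H →L[ℝ] H →L[ℝ] ℝ) : (Fin N → ℝ) →L[ℝ] (H →L[ℝ] H) :=
  ∑ i, (ContinuousLinearMap.proj i).smulRight (continuousLinearMapOfBilin (𝕜 := ℝ) (b i))

lemma PSMphi_apply (s : Fin N → ℝ) :
    PSMphi b s = ∑ i, s i • continuousLinearMapOfBilin (𝕜 := ℝ) (b i) := by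
  simp [PSMphi, ContinuousLinearMap.sum_apply]

lemma PSMphi_single (i : Fin N) :
    PSMphi b (Pi.single i 1) = continuousLinearMapOfBilin (𝕜 := ℝ) (b i) := by
  rw [PSMphi_apply]
  rw [Finset.sum_eq_single i]
  · simp
  · intro j _ hj; simp [Pi.single_eq_of_ne hj]
  · simp

lemma PSMtmap_hasFDerivAt (t : Fin N → ℝ) :
    HasFDerivAt (PSMtmap b0 b) (PSMphi b) t := by
  have : PSMtmap b0 b = fun s => continuousLinearMapOfBilin (𝕜 := ℝ) b0 + PSMphi b s := by
    funext s; rw [PSMtmap, PSMphi_apply]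
  rw [this]
  exact (PSMphi b).hasFDerivAt.const_add _

lemma PSMkey {t : Fin N → ℝ} (hT : IsUnit (PSMtmap b0 b t)) {g : (Fin N → ℝ) → H}
    {g' : (Fin N → ℝ) →L[ℝ] H} (hg : HasFDerivAt g g' t) :
    DifferentiableAt ℝ (fun s => Ring.inverse (PSMtmap b0 b s) (g s)) t ∧
    ∀ i, fderiv ℝ (fun s => Ring.inverse (PSMtmap b0 b s) (g s)) t (Pi.single i 1)
      = Ring.inverse (PSMtmap b0 b t)
          (g' (Pi.single i 1) - continuousLinearMapOfBilin (𝕜 := ℝ) (b i)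
            (Ring.inverse (PSMtmap b0 b t) (g t))) := by
  have hinv : ((hT.unit⁻¹ : (H →L[ℝ] H)ˣ) : H →L[ℝ] H) = Ring.inverse (PSMtmap b0 b t) := by
    rw [← Ring.inverse_unit, IsUnit.unit_spec]
  have h1 : HasFDerivAt (Ring.inverse (M₀ := H →L[ℝ] H))
      (-mulLeftRight ℝ (H →L[ℝ] H) (Ring.inverse (PSMtmap b0 b t))
        (Ring.inverse (PSMtmap b0 b t))) (PSMtmap b0 b t) := by
    have := hasFDerivAt_ringInverse (𝕜 := ℝ) (R := H →L[ℝ] H) hT.unit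
    rwa [hinv, IsUnit.unit_spec] at this
  have hJ : HasFDerivAt (fun s => Ring.inverse (PSMtmap b0 b s))
      ((-mulLeftRight ℝ (H →L[ℝ] H) (Ring.inverse (PSMtmap b0 b t))
        (Ring.inverse (PSMtmap b0 b t))).comp (PSMphi b)) t :=
    h1.comp t (PSMtmap_hasFDerivAt b0 b t)
  have hfull := hJ.clm_apply hg
  refine ⟨hfull.differentiableAt, fun i => ?_⟩
  rw [hfull.fderiv]
  simp only [ContinuousLinearMap.add_apply, ContinuousLinearMap.coe_comp',
    Function.comp_apply, ContinuousLinearMap.flip_apply, ContinuousLinearMap.neg_apply,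
    PSMphi_single, mulLeftRight_apply, map_sub, ContinuousLinearMap.mul_apply]
  abel

section MultiIndex
variable {α : Fin N → ℕ} {i j k : Fin N}

lemma PSMone_le_sum (h : α ≠ 0) : 1 ≤ ∑ i : Fin N, α i := by
  by_contra hcon
  have h0 : ∑ i : Fin N, α i = 0 := by omega
  exact h (funext fun i => by
    have := (Finset.sum_eq_zero_iff.1 h0) i (Finset.mem_univ i); simpa using this)

lemma PSMsum_add_single : ∑ i : Fin N, (α + Pi.single j 1 : Fin N → ℕ) i
    = (∑ i : Fin N, α i) + 1 := by
  simp only [Pi.add_apply]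
  rw [Finset.sum_add_distrib]
  congr 1
  simp [Finset.sum_pi_single]

lemma PSMsingle_inj (h : (Pi.single i 1 : Fin N → ℕ) = Pi.single k 1) : i = k := by
  by_contra hne
  have := congrFun h i
  rw [Pi.single_eq_same, Pi.single_eq_of_ne hne] at this
  exact one_ne_zero this

lemma PSMadd_single_ne_zero : (α + Pi.single i 1 : Fin N → ℕ) ≠ 0 := by
  intro h
  have := congrFun h i
  simp [Pi.single_eq_same] at this

lemma PSMadd_single_ne_single (h : α ≠ 0) :
    (α + Pi.single i 1 : Fin N → ℕ) ≠ Pi.single k 1 := by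
  intro heq
  have h1 : ∑ m : Fin N, (α + Pi.single i 1 : Fin N → ℕ) m
      = ∑ m : Fin N, (Pi.single k 1 : Fin N → ℕ) m := by rw [heq]
  rw [PSMsum_add_single] at h1
  have h2 : ∑ m : Fin N, (Pi.single k 1 : Fin N → ℕ) m = 1 := by
    simp [Finset.sum_pi_single]
  have := PSMone_le_sum h
  omega

lemma PSMsub_add_eq (hj : α j ≠ 0) :
    (α - Pi.single j 1 + Pi.single i 1 : Fin N → ℕ)
      = (α + Pi.single i 1 - Pi.single j 1 : Fin N → ℕ) := by
  funext m
  simp only [Pi.add_apply, Pi.sub_apply]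
  by_cases h1 : m = j
  · have hm : α m ≠ 0 := by rw [h1]; exact hj
    have hsj : (Pi.single j 1 : Fin N → ℕ) m = 1 := by rw [h1]; simp
    rw [hsj]; omega
  · have hsj : (Pi.single j 1 : Fin N → ℕ) m = 0 := Pi.single_eq_of_ne h1 1
    rw [hsj]; omega

lemma PSMsub_add_cancel (hj : α j ≠ 0) :
    (α - Pi.single j 1 + Pi.single j 1 : Fin N → ℕ) = α := by
  funext m
  simp only [Pi.add_apply, Pi.sub_apply]
  by_cases h1 : m = j
  · have hm : α m ≠ 0 := by rw [h1]; exact hj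
    have hsj : (Pi.single j 1 : Fin N → ℕ) m = 1 := by rw [h1]; simp
    rw [hsj]; omega
  · have hsj : (Pi.single j 1 : Fin N → ℕ) m = 0 := Pi.single_eq_of_ne h1 1
    rw [hsj]; omega

lemma PSMadd_sub_cancel : (α + Pi.single i 1 - Pi.single i 1 : Fin N → ℕ) = α := by
  funext m
  simp only [Pi.add_apply, Pi.sub_apply]
  omega

lemma PSMsingle_sub_self : ((Pi.single i 1 : Fin N → ℕ) - Pi.single i 1) = 0 := by
  funext m; simp

end MultiIndex

lemma PSMpsi_single {V : Type*} [NormedAddCommGroup V] [NormedSpace ℝ V]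
    (v : Fin N → V) (i : Fin N) :
    (∑ j, (ContinuousLinearMap.proj j).smulRight (v j) :
      (Fin N → ℝ) →L[ℝ] V) (Pi.single i 1) = v i := by
  rw [ContinuousLinearMap.sum_apply, Finset.sum_eq_single i]
  · simp
  · intro j _ hj; simp [Pi.single_eq_of_ne hj]
  · simp

lemma PSMmain {c : ℝ} (hc : 0 < c) {U : Set (Fin N → ℝ)}
    (hcoer : ∀ t ∈ U, ∀ v : H, c * ‖v‖ ^ 2 ≤ b0 v v + ∑ i, t i * b i v v) :
    ∀ n : ℕ, ∀ α : Fin N → ℕ, ∑ i : Fin N, α i ≤ n → ∀ t ∈ U,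
      DifferentiableAt ℝ (PSMw b0 b l0 l α) t ∧
      ∀ i, fderiv ℝ (PSMw b0 b l0 l α) t (Pi.single i 1)
        = PSMw b0 b l0 l (α + Pi.single i 1) t := by
  intro n
  induction n with
  | zero =>
    intro α hα t ht
    have hα0 : α = 0 := by
      funext i
      have h0 : ∑ i : Fin N, α i = 0 := Nat.le_zero.1 hα
      have := (Finset.sum_eq_zero_iff.1 h0) i (Finset.mem_univ i)
      simpa using this
    subst hα0
    have hT := PSMtmap_isUnit b0 b hc (hcoer t ht)
    have hwf : PSMw b0 b l0 l 0
        = fun s => Ring.inverse (PSMtmap b0 b s) (PSMg b0 b l0 l 0 s) :=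
      funext fun s => PSMw_eq b0 b l0 l 0 s
    have hg0 : PSMg b0 b l0 l 0 = fun s : Fin N → ℝ =>
        PSMrho l0 + (∑ j, (ContinuousLinearMap.proj j).smulRight (PSMrho (l j)) :
          (Fin N → ℝ) →L[ℝ] H) s := by
      funext s
      simp [PSMg, ContinuousLinearMap.sum_apply]
    have hgD : HasFDerivAt (PSMg b0 b l0 l 0)
        (∑ j, (ContinuousLinearMap.proj j).smulRight (PSMrho (l j)) :
          (Fin N → ℝ) →L[ℝ] H) t := by
      rw [hg0]
      exact ((∑ j, (ContinuousLinearMap.proj j).smulRight (PSMrho (l j)) :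
        (Fin N → ℝ) →L[ℝ] H)).hasFDerivAt.const_add _
    obtain ⟨hdiff, hfd⟩ := PSMkey b0 b hT hgD
    rw [hwf]
    refine ⟨hdiff, fun i => ?_⟩
    rw [hfd i, ← PSMw_eq b0 b l0 l 0 t]
    have h0i : ((0 : Fin N → ℕ) + Pi.single i 1) = Pi.single i 1 := by simp
    rw [h0i, PSMw_eq b0 b l0 l (Pi.single i 1) t]
    congr 1
    rw [PSMpsi_single]
    have hne : (Pi.single i 1 : Fin N → ℕ) ≠ 0 := by
      intro h; have := congrFun h i; simp [Pi.single_eq_same] at this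
    rw [PSMg, if_neg hne]
    have hΛ : (∑ k, if (Pi.single i 1 : Fin N → ℕ) = Pi.single k 1
        then PSMrho (l k) else 0) = PSMrho (l i) := by
      rw [Finset.sum_eq_single i]
      · simp
      · intro k _ hk
        rw [if_neg (fun h => hk (PSMsingle_inj h).symm)]
      · simp
    have hS : (∑ j : Fin N, if (Pi.single i 1 : Fin N → ℕ) j = 0 then 0
        else ((Pi.single i 1 : Fin N → ℕ) j : ℝ) • continuousLinearMapOfBilin (𝕜 := ℝ) (b j)
          (PSMw b0 b l0 l ((Pi.single i 1 : Fin N → ℕ) - Pi.single j 1) t))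
        = continuousLinearMapOfBilin (𝕜 := ℝ) (b i)
            (PSMw b0 b l0 l 0 t) := by
      rw [Finset.sum_eq_single i]
      · rw [if_neg (by simp : ¬ (Pi.single i 1 : Fin N → ℕ) i = 0)]
        rw [PSMsingle_sub_self]
        simp
      · intro k _ hk
        rw [if_pos (Pi.single_eq_of_ne hk 1)]
      · simp
    rw [hΛ, hS]
  | succ n ih =>
    intro α hα t ht
    by_cases hle : ∑ i : Fin N, α i ≤ n
    · exact ih α hle t ht
    have hαne : α ≠ 0 := by
      intro h; subst h; simp at hle
    have hT := PSMtmap_isUnit b0 b hc (hcoer t ht)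
    have hwf : PSMw b0 b l0 l α
        = fun s => Ring.inverse (PSMtmap b0 b s) (PSMg b0 b l0 l α s) :=
      funext fun s => PSMw_eq b0 b l0 l α s
    -- derivative of each summand
    have key : ∀ j : Fin N, ∃ D : (Fin N → ℝ) →L[ℝ] H,
        HasFDerivAt (fun s => if α j = 0 then (0:H)
            else (α j : ℝ) • continuousLinearMapOfBilin (𝕜 := ℝ) (b j)
              (PSMw b0 b l0 l (α - Pi.single j 1) s)) D t ∧
        ∀ i, D (Pi.single i 1) = if α j = 0 then 0
            else (α j : ℝ) • continuousLinearMapOfBilin (𝕜 := ℝ) (b j)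
              (PSMw b0 b l0 l (α - Pi.single j 1 + Pi.single i 1) t) := by
      intro j
      by_cases hj : α j = 0
      · refine ⟨0, ?_, ?_⟩
        · simp only [if_pos hj]
          exact hasFDerivAt_const _ _
        · intro i; simp [hj]
      · have hdeg : ∑ i : Fin N, (α - Pi.single j 1 : Fin N → ℕ) i ≤ n := by
          have := PSMsum_single_lt (α := α) (j := j) hj
          omega
        obtain ⟨hdiff, hfd⟩ := ih (α - Pi.single j 1) hdeg t ht
        refine ⟨((α j : ℝ) • continuousLinearMapOfBilin (𝕜 := ℝ) (b j)).comp
            (fderiv ℝ (PSMw b0 b l0 l (α - Pi.single j 1)) t), ?_, ?_⟩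
        · simp only [if_neg hj]
          have := ((α j : ℝ) • continuousLinearMapOfBilin (𝕜 := ℝ) (b j)).hasFDerivAt.comp t
            hdiff.hasFDerivAt
          exact this
        · intro i
          simp only [if_neg hj, ContinuousLinearMap.coe_comp', Function.comp_apply,
            hfd i, ContinuousLinearMap.smul_apply]
    choose D hD hDval using key
    have hS : HasFDerivAt (fun s => ∑ j : Fin N, if α j = 0 then (0:H)
        else (α j : ℝ) • continuousLinearMapOfBilin (𝕜 := ℝ) (b j)
          (PSMw b0 b l0 l (α - Pi.single j 1) s)) (∑ j, D j) t :=
      HasFDerivAt.fun_sum (fun j _ => hD j)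
    have hgform : PSMg b0 b l0 l α = fun s =>
        (∑ i, if α = Pi.single i 1 then PSMrho (l i) else 0) -
        ∑ j : Fin N, (if α j = 0 then (0:H)
          else (α j : ℝ) • continuousLinearMapOfBilin (𝕜 := ℝ) (b j)
            (PSMw b0 b l0 l (α - Pi.single j 1) s)) := by
      funext s
      rw [PSMg, if_neg hαne]
    have hgD : HasFDerivAt (PSMg b0 b l0 l α) (-(∑ j, D j)) t := by
      rw [hgform]
      exact hS.const_sub _
    obtain ⟨hdiff, hfd⟩ := PSMkey b0 b hT hgD
    rw [hwf]
    refine ⟨hdiff, fun i => ?_⟩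
    rw [hfd i, ← PSMw_eq b0 b l0 l α t, PSMw_eq b0 b l0 l (α + Pi.single i 1) t]
    congr 1
    -- show derivative argument equals PSMg (α + e i) t
    rw [PSMg, if_neg (PSMadd_single_ne_zero)]
    have hΛ : (∑ k, if (α + Pi.single i 1 : Fin N → ℕ) = Pi.single k 1
        then PSMrho (l k) else 0) = 0 := by
      apply Finset.sum_eq_zero
      intro k _
      rw [if_neg (PSMadd_single_ne_single hαne)]
    rw [hΛ, zero_sub, ContinuousLinearMap.neg_apply, ContinuousLinearMap.sum_apply]
    have hsum : ∑ j : Fin N, (if (α + Pi.single i 1 : Fin N → ℕ) j = 0 then (0:H)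
        else (((α + Pi.single i 1 : Fin N → ℕ) j : ℝ)) •
          continuousLinearMapOfBilin (𝕜 := ℝ) (b j)
            (PSMw b0 b l0 l ((α + Pi.single i 1 : Fin N → ℕ) - Pi.single j 1) t))
        = (∑ j, D j (Pi.single i 1)) +
          continuousLinearMapOfBilin (𝕜 := ℝ) (b i)
            (PSMw b0 b l0 l α t) := by
      rw [← Finset.sum_erase_add _ _ (Finset.mem_univ i),
        ← Finset.sum_erase_add _ _ (Finset.mem_univ i)]
      have herase : ∀ j ∈ Finset.univ.erase i,
          (if (α + Pi.single i 1 : Fin N → ℕ) j = 0 then (0:H)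
            else (((α + Pi.single i 1 : Fin N → ℕ) j : ℝ)) •
              continuousLinearMapOfBilin (𝕜 := ℝ) (b j)
                (PSMw b0 b l0 l ((α + Pi.single i 1 : Fin N → ℕ) - Pi.single j 1) t))
          = D j (Pi.single i 1) := by
        intro j hj
        have hji : j ≠ i := Finset.ne_of_mem_erase hj
        have hval : (α + Pi.single i 1 : Fin N → ℕ) j = α j := by
          simp [Pi.single_eq_of_ne hji]
        rw [hDval j i, hval]
        by_cases hj0 : α j = 0
        · rw [if_pos hj0, if_pos hj0]
        · rw [if_neg hj0, if_neg hj0, PSMsub_add_eq hj0]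
      rw [Finset.sum_congr rfl herase]
      have hi : (if (α + Pi.single i 1 : Fin N → ℕ) i = 0 then (0:H)
            else (((α + Pi.single i 1 : Fin N → ℕ) i : ℝ)) •
              continuousLinearMapOfBilin (𝕜 := ℝ) (b i)
                (PSMw b0 b l0 l ((α + Pi.single i 1 : Fin N → ℕ) - Pi.single i 1) t))
          = D i (Pi.single i 1) + continuousLinearMapOfBilin (𝕜 := ℝ) (b i)
              (PSMw b0 b l0 l α t) := by
        have hvi : (α + Pi.single i 1 : Fin N → ℕ) i = α i + 1 := by
          simp [Pi.single_eq_same]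
        rw [hvi, if_neg (Nat.succ_ne_zero _), PSMadd_sub_cancel, hDval i i]
        by_cases hi0 : α i = 0
        · rw [if_pos hi0, hi0]
          simp
        · rw [if_neg hi0, PSMsub_add_cancel hi0]
          push_cast
          rw [add_smul, one_smul]
      rw [hi]
      abel
    rw [hsum]
    abel

end


/-- Abstract form of the differentiated equations (2.14)–(2.15), higher
order: under coercivity on an open set `U ⊇ [0,1]^N`, the recursively defined family
`w_α` is well defined (`w_0 = u`, and for `|α| ≥ 1` the element `w_α(t)` is the unique
solution of `a_t(w_α, v) = ℓ_α(v) − ∑ⱼ αⱼ bⱼ(w_{α−eⱼ}(t), v)`, where `ℓ_α = ℓᵢ` if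
`α = eᵢ` and `ℓ_α = 0` for `|α| ≥ 2`), the solution map has partial derivatives of all
orders on `U`, and `∂_t^α u = w_α` on `U`. -/
theorem parametric_solution_map_higher_order_derivatives
    {H : Type*} [NormedAddCommGroup H] [InnerProductSpace ℝ H] [CompleteSpace H]
    {N : ℕ} (hN : 1 ≤ N)
    (b0 : H →L[ℝ] H →L[ℝ] ℝ) (b : Fin N → H →L[ℝ] H →L[ℝ] ℝ)
    (l0 : H →L[ℝ] ℝ) (l : Fin N → H →L[ℝ] ℝ)
    (c : ℝ) (hc : 0 < c)
    (U : Set (Fin N → ℝ)) (hUopen : IsOpen U)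
    (hU : {s : Fin N → ℝ | ∀ i, s i ∈ Set.Icc (0 : ℝ) 1} ⊆ U)
    (hcoer : ∀ t ∈ U, ∀ v : H, c * ‖v‖ ^ 2 ≤ b0 v v + ∑ i, t i * b i v v)
    (u : (Fin N → ℝ) → H)
    (hu : ∀ t ∈ U, ∀ v : H,
      b0 (u t) v + ∑ i, t i * b i (u t) v = l0 v + ∑ i, t i * l i v) :
    ∃ w : (Fin N → ℕ) → (Fin N → ℝ) → H,
      (∀ t ∈ U, w 0 t = u t) ∧
      (∀ α : Fin N → ℕ, α ≠ 0 → ∀ t ∈ U,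
        (∀ v : H,
          b0 (w α t) v + ∑ j, t j * b j (w α t) v
            = (∑ i, if α = Pi.single i 1 then l i v else 0)
              - ∑ j, (α j : ℝ) * b j (w (α - Pi.single j 1) t) v) ∧
        (∀ w' : H,
          (∀ v : H,
            b0 w' v + ∑ j, t j * b j w' v
              = (∑ i, if α = Pi.single i 1 then l i v else 0)
                - ∑ j, (α j : ℝ) * b j (w (α - Pi.single j 1) t) v) →
          w' = w α t)) ∧
      (∀ α : Fin N → ℕ, ∀ t ∈ U,
        DifferentiableAt ℝ (w α) t ∧
        ∀ i : Fin N, fderiv ℝ (w α) t (Pi.single i 1) = w (α + Pi.single i 1) t) := by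
  classical
  refine ⟨PSMw b0 b l0 l, ?_, ?_, ?_⟩
  · intro t ht
    have hT := PSMtmap_isUnit b0 b hc (hcoer t ht)
    have hTu : PSMtmap b0 b t (u t) = PSMg b0 b l0 l 0 t := by
      apply ext_inner_right ℝ
      intro v
      rw [PSMinner_tmap, hu t ht v]
      simp [PSMg, inner_add_left, sum_inner, real_inner_smul_left, PSMinner_rho]
    rw [PSMw_eq, ← hTu, PSMinv_apply b0 b hT]
  · intro α hα t ht
    have hT := PSMtmap_isUnit b0 b hc (hcoer t ht)
    have hGinner : ∀ v : H, ⟪PSMg b0 b l0 l α t, v⟫_ℝ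
        = (∑ i, if α = Pi.single i 1 then l i v else 0)
          - ∑ j, (α j : ℝ) * b j (PSMw b0 b l0 l (α - Pi.single j 1) t) v := by
      intro v
      rw [PSMg, if_neg hα, inner_sub_left, sum_inner, sum_inner]
      congr 1
      · apply Finset.sum_congr rfl
        intro k _
        by_cases h : α = Pi.single k 1
        · rw [if_pos h, if_pos h, PSMinner_rho]
        · rw [if_neg h, if_neg h, inner_zero_left]
      · apply Finset.sum_congr rfl
        intro j _
        by_cases h : α j = 0
        · rw [if_pos h, inner_zero_left, h]; simp
        · rw [if_neg h, real_inner_smul_left,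
            continuousLinearMapOfBilin_apply (𝕜 := ℝ)]
    constructor
    · intro v
      have h1 : b0 (PSMw b0 b l0 l α t) v + ∑ j, t j * b j (PSMw b0 b l0 l α t) v
          = ⟪PSMtmap b0 b t (PSMw b0 b l0 l α t), v⟫_ℝ :=
        (PSMinner_tmap b0 b t _ v).symm
      rw [h1, PSMw_eq, PSMapply_inv b0 b hT, hGinner v]
    · intro w' hw'
      have h2 : PSMtmap b0 b t w' = PSMg b0 b l0 l α t := by
        apply ext_inner_right ℝ
        intro v
        rw [PSMinner_tmap, hw' v, ← hGinner v]
      have h3 := congrArg (fun x => Ring.inverse (PSMtmap b0 b t) x) h2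
      rw [PSMinv_apply b0 b hT] at h3
      rw [h3, ← PSMw_eq]
  · intro α t ht
    exact PSMmain b0 b l0 l hc hcoer (∑ i, α i) α le_rfl t ht
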